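/- Let d ≥ 1 and let (a_n) be a positive sequence in ℓ^{2d/(d+2)}. Then there exist a constant K > 0 and a map h : HC(I^d; ā) → W_2(I^d) that is a homothetic embedding: W_2(h(x̄), h(ȳ)) = K·d_{ā}(x̄, ȳ) for all x̄, ȳ. -/

import Mathlib

open MeasureTheory ENNReal

/-- `π` is a coupling of `μ` and `ν`. -/
def IsCoupling {X : Type*} [MeasurableSpace X] (μ ν : Measure X)
    (π : Measure (X × X)) : Prop :=
  π.map Prod.fst = μ ∧ π.map Prod.snd = ν

/-- The `L^p` Wasserstein distance between two measures, as the infimal `p`-cost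
over all couplings, to the power `1/p`. -/
noncomputable def Wp {X : Type*} [MetricSpace X] [MeasurableSpace X]
    (p : ℝ) (μ ν : Measure X) : ℝ≥0∞ :=
  (⨅ (π : Measure (X × X)) (_ : IsCoupling μ ν π),
    ∫⁻ z, ENNReal.ofReal (dist z.1 z.2 ^ p) ∂π) ^ (1 / p)

/-- The unit Euclidean cube `I^d`, as a subtype of `EuclideanSpace ℝ (Fin d)`. -/
def UnitCube (d : ℕ) : Type :=
  {x : EuclideanSpace ℝ (Fin d) // ∀ i, x i ∈ Set.Icc (0:ℝ) 1}

noncomputable instance (d : ℕ) : MetricSpace (UnitCube d) :=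
  inferInstanceAs (MetricSpace {x : EuclideanSpace ℝ (Fin d) // ∀ i, x i ∈ Set.Icc (0:ℝ) 1})

instance (d : ℕ) : MeasurableSpace (UnitCube d) :=
  inferInstanceAs (MeasurableSpace {x : EuclideanSpace ℝ (Fin d) // ∀ i, x i ∈ Set.Icc (0:ℝ) 1})

instance (d : ℕ) : MeasurableSingletonClass (UnitCube d) :=
  inferInstanceAs
    (MeasurableSingletonClass {x : EuclideanSpace ℝ (Fin d) // ∀ i, x i ∈ Set.Icc (0:ℝ) 1})

lemma UnitCube.dist_eq' {d : ℕ} (x y : UnitCube d) :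
    dist x y = Real.sqrt (∑ i, (x.1 i - y.1 i)^2) := by
  have h := Subtype.dist_eq
    (p := fun x : EuclideanSpace ℝ (Fin d) => ∀ i, x i ∈ Set.Icc (0:ℝ) 1) x y
  refine h.trans ?_
  rw [EuclideanSpace.dist_eq]
  congr 1
  refine Finset.sum_congr rfl fun i _ => ?_
  rw [Real.dist_eq, sq_abs]


lemma digits_injective (B : ℕ) (hB : 0 < B) : ∀ (K a b : ℕ), a < B^K → b < B^K →
    (∀ k < K, a / B^k % B = b / B^k % B) → a = b := by
  intro K
  induction K with
  | zero => intro a b ha hb _; simp at ha hb; omega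
  | succ K ih =>
    intro a b ha hb h
    have h0 := h 0 (by omega)
    simp only [pow_zero, Nat.div_one] at h0
    have ha' : a / B < B ^ K := by
      rw [Nat.div_lt_iff_lt_mul hB]; rw [pow_succ] at ha; exact ha
    have hb' : b / B < B ^ K := by
      rw [Nat.div_lt_iff_lt_mul hB]; rw [pow_succ] at hb; exact hb
    have hd : ∀ k < K, (a / B) / B^k % B = (b / B) / B^k % B := by
      intro k hk
      have := h (k+1) (by omega)
      rwa [pow_succ', ← Nat.div_div_eq_div_mul, ← Nat.div_div_eq_div_mul] at this
    have heq := ih (a / B) (b / B) ha' hb' hd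
    have h1 := Nat.div_add_mod a B
    have h2 := Nat.div_add_mod b B
    rw [heq, h0] at h1
    omega

set_option maxHeartbeats 2000000 in
theorem packing (d : ℕ) (hd : 1 ≤ d) (c : ℕ → ℝ) (hc : ∀ n, 0 < c n)
    (hcsum : Summable (fun n => c n ^ d)) (hctsum : ∑' n, c n ^ d ≤ 1) :
    ∃ K : ℝ, 0 < K ∧ ∃ F : ℕ → (Fin d → ℝ) → (Fin d → ℝ),
      (∀ n u, (∀ i, u i ∈ Set.Icc (0:ℝ) 1) → ∀ i, F n u i ∈ Set.Icc (0:ℝ) 1) ∧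
      (∀ n u w i, F n u i - F n w i = K * c n * (u i - w i)) ∧
      (∀ n m u w, (∀ i, u i ∈ Set.Icc (0:ℝ) 1) → (∀ i, w i ∈ Set.Icc (0:ℝ) 1) → n ≠ m →
        ∃ i, (d : ℝ) * (K * max (c n) (c m)) ≤ |F n u i - F m w i|) := by
  have hd0 : (0:ℝ) < d := by exact_mod_cast hd
  -- each c n is at most 1
  have hc1 : ∀ n, c n ≤ 1 := by
    intro n
    have h1 : c n ^ d ≤ 1 := le_trans (Summable.le_tsum hcsum n (fun m _ => pow_nonneg (hc m).le d)) hctsum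
    exact (pow_le_one_iff_of_nonneg (hc n).le (by omega)).mp h1
  -- the dyadic scale of each n
  have hex : ∀ n, ∃ j : ℕ, (2⁻¹:ℝ)^(j+1) < c n := by
    intro n
    obtain ⟨k, hk⟩ := exists_pow_lt_of_lt_one (hc n) (by norm_num : (2⁻¹:ℝ) < 1)
    exact ⟨k, lt_of_le_of_lt
      (pow_le_pow_of_le_one (by norm_num) (by norm_num) (Nat.le_succ k)) hk⟩
  set sc : ℕ → ℕ := fun n => Nat.find (hex n) with hsc_def
  set L : ℕ → ℝ := fun j => (2⁻¹:ℝ)^j with hL_def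
  have hL0 : ∀ j, 0 < L j := fun j => by positivity
  have hLanti : ∀ {j j'}, j ≤ j' → L j' ≤ L j := fun {j j'} h =>
    pow_le_pow_of_le_one (by norm_num) (by norm_num) h
  have hsc1 : ∀ n, L (sc n) / 2 < c n := by
    intro n
    have := Nat.find_spec (hex n)
    calc L (sc n) / 2 = (2⁻¹:ℝ)^(sc n + 1) := by
          rw [hL_def, pow_succ]; ring
      _ < c n := this
  have hsc2 : ∀ n, c n ≤ L (sc n) := by
    intro n
    rcases Nat.eq_zero_or_pos (sc n) with h | h
    · rw [h, hL_def]; simpa using hc1 n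
    · have := Nat.find_min (hex n) (show sc n - 1 < sc n by omega)
      push_neg at this
      calc c n ≤ (2⁻¹:ℝ)^(sc n - 1 + 1) := this
        _ = L (sc n) := by congr 1; omega
  -- the scale classes are finite
  have hfin : ∀ j, {n | sc n = j}.Finite := by
    intro j
    have h0 : (0:ℝ) < ((2⁻¹:ℝ)^(j+1))^d := by positivity
    have ht := hcsum.tendsto_atTop_zero
    have hev : ∀ᶠ n in Filter.atTop, c n ^ d < ((2⁻¹:ℝ)^(j+1))^d :=
      ht.eventually (gt_mem_nhds h0)
    obtain ⟨M, hM⟩ := Filter.eventually_atTop.mp hev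
    refine Set.Finite.subset (Set.finite_Iio M) ?_
    intro n hn
    simp only [Set.mem_setOf_eq] at hn
    by_contra hcon
    simp only [Set.mem_Iio, not_lt] at hcon
    have h1 := hM n hcon
    have h2 : (2⁻¹:ℝ)^(j+1) < c n := by
      have := Nat.find_spec (hex n); rwa [show Nat.find (hex n) = j from hn] at this
    have h3 : ((2⁻¹:ℝ)^(j+1))^d ≤ c n ^ d :=
      pow_le_pow_left₀ (by positivity) h2.le d
    linarith
  set G : ℕ → Finset ℕ := fun j => (hfin j).toFinset with hG_def
  have hGmem : ∀ j n, n ∈ G j ↔ sc n = j := by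
    intro j n; rw [hG_def]; simp [Set.Finite.mem_toFinset]
  set N : ℕ → ℕ := fun j => (G j).card with hN_def
  set cap : ℕ → ℕ := fun j => 2^(j*(d-1)) with hcap_def
  have hcap : ∀ j, 0 < cap j := fun j => pow_pos (by omega) _
  set mj : ℕ → ℕ := fun j => (N j + cap j - 1)/cap j with hmj_def
  have hNle : ∀ j, N j ≤ mj j * cap j := by
    intro j
    show N j ≤ (N j + cap j - 1) / cap j * cap j
    have h1 := Nat.div_add_mod (N j + cap j - 1) (cap j)
    have h2 := Nat.mod_lt (N j + cap j - 1) (hcap j)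
    have h3 := hcap j
    have h4 : cap j * ((N j + cap j - 1) / cap j) = (N j + cap j - 1) / cap j * cap j :=
      Nat.mul_comm _ _
    omega
  have hmj0 : ∀ j, N j = 0 → mj j = 0 := by
    intro j h
    rw [hmj_def]
    simp only [h, zero_add]
    exact Nat.div_eq_of_lt (by have := hcap j; omega)
  have hmjle : ∀ j, (mj j : ℝ) * cap j ≤ N j + cap j := by
    intro j
    have h1 : mj j * cap j ≤ N j + cap j := by
      have h2 : (N j + cap j - 1) / cap j * cap j ≤ N j + cap j - 1 := Nat.div_mul_le_self _ _
      have h3 := hcap j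
      show (N j + cap j - 1) / cap j * cap j ≤ N j + cap j
      omega
    exact_mod_cast h1
  -- index of n within its scale class
  set idx : ℕ → ℕ := fun n => ((G (sc n)).filter (fun m => m < n)).card with hidx_def
  have hidxlt : ∀ n, idx n < N (sc n) := by
    intro n
    apply Finset.card_lt_card
    rw [Finset.ssubset_iff_of_subset (Finset.filter_subset _ _)]
    exact ⟨n, (hGmem _ n).mpr rfl, by simp⟩
  have hidxmono : ∀ a b, a < b → sc a = sc b → idx a < idx b := by
    intro a b hab hscab
    have hsub : insert a ((G (sc a)).filter (fun m => m < a)) ⊆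
        (G (sc b)).filter (fun m => m < b) := by
      intro m hm
      rcases Finset.mem_insert.mp hm with rfl | hm
      · exact Finset.mem_filter.mpr ⟨(hGmem _ m).mpr hscab, hab⟩
      · obtain ⟨h1, h2⟩ := Finset.mem_filter.mp hm
        refine Finset.mem_filter.mpr ⟨?_, lt_trans h2 hab⟩
        rwa [← hscab]
    have hcard := Finset.card_le_card hsub
    rw [Finset.card_insert_of_notMem (by simp)] at hcard
    exact hcard
  have hidxinj : ∀ a b, sc a = sc b → idx a = idx b → a = b := by
    intro a b h1 h2
    rcases lt_trichotomy a b with h | h | h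
    · exact absurd h2 (Nat.ne_of_lt (hidxmono a b h h1))
    · exact h
    · exact absurd h2.symm (Nat.ne_of_lt (hidxmono b a h h1.symm))
  set lay : ℕ → ℕ := fun n => idx n / cap (sc n) with hlay_def
  set pos : ℕ → ℕ := fun n => idx n % cap (sc n) with hpos_def
  have hlay_lt : ∀ n, lay n < mj (sc n) := by
    intro n
    rw [hlay_def]
    simp only []
    rw [Nat.div_lt_iff_lt_mul (hcap _)]
    exact lt_of_lt_of_le (hidxlt n) (hNle _)
  have hpos_lt : ∀ n, pos n < cap (sc n) := fun n => Nat.mod_lt _ (hcap _)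
  have hidx_eq : ∀ n, idx n = lay n * cap (sc n) + pos n := by
    intro n
    show idx n = idx n / cap (sc n) * cap (sc n) + idx n % cap (sc n)
    have h1 := Nat.div_add_mod (idx n) (cap (sc n))
    have h2 : cap (sc n) * (idx n / cap (sc n)) = idx n / cap (sc n) * cap (sc n) :=
      Nat.mul_comm _ _
    omega
  -- digits of pos in base 2^(sc n)
  set dig : ℕ → ℕ → ℕ := fun n k => pos n / (2^(sc n))^k % (2^(sc n)) with hdig_def
  have hdig_lt : ∀ n k, dig n k < 2^(sc n) := fun n k => Nat.mod_lt _ (by positivity)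
  have hpos_inj : ∀ a b, sc a = sc b → (∀ k, k < d - 1 → dig a k = dig b k) →
      pos a = pos b := by
    intro a b h1 h2
    have hb2 : pos b < (2^(sc a))^(d-1) := by
      rw [← pow_mul, h1]; exact hpos_lt b
    have ha2 : pos a < (2^(sc a))^(d-1) := by
      rw [← pow_mul]; exact hpos_lt a
    refine digits_injective (2^(sc a)) (by positivity) (d-1) _ _ ha2 hb2 ?_
    intro k hk
    have h3 := h2 k hk
    rw [hdig_def] at h3
    simp only [] at h3
    rw [← h1] at h3
    exact h3
  -- the vertical offsets
  set z : ℕ → ℝ := fun j => ∑ i ∈ Finset.range j, (mj i : ℝ) * L i with hz_def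
  have hz0 : ∀ j, 0 ≤ z j := by
    intro j
    apply Finset.sum_nonneg
    intro i _
    positivity
  have hzmono : ∀ {j j'}, j ≤ j' → z j ≤ z j' := by
    intro j j' h
    apply Finset.sum_le_sum_of_subset_of_nonneg (Finset.range_subset_range.mpr h)
    intro i _ _
    positivity
  have hzsucc : ∀ j, z (j+1) = z j + mj j * L j := fun j => Finset.sum_range_succ _ j
  -- the key volume estimate : z (j+1) ≤ 2^d + 2
  have hzB : ∀ j, z (j+1) ≤ (2:ℝ)^d + 2 := by
    intro j
    have hterm : ∀ i, (mj i:ℝ) * L i ≤ 2^d * (∑ n ∈ G i, c n ^ d) + L i := by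
      intro i
      have hsumnn : (0:ℝ) ≤ ∑ n ∈ G i, c n ^ d :=
        Finset.sum_nonneg fun n _ => pow_nonneg (hc n).le d
      rcases Nat.eq_zero_or_pos (N i) with h0 | h0
      · rw [hmj0 i h0]
        simp only [Nat.cast_zero, zero_mul]
        positivity
      · -- mj i * L i ≤ (N i / cap i) * L i + L i
        have hstep1 : (mj i:ℝ) * L i ≤ (N i : ℝ) * (L i / cap i) + L i := by
          have hcappos : (0:ℝ) < cap i := by exact_mod_cast hcap i
          have h5 := hmjle i
          have hLpos := hL0 i
          have key : (mj i:ℝ) * cap i * (L i / cap i) ≤ ((N i:ℝ) + cap i) * (L i / cap i) :=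
            mul_le_mul_of_nonneg_right h5 (by positivity)
          have hfix : (mj i:ℝ) * cap i * (L i / cap i) = mj i * L i := by
            field_simp
          have hfix2 : ((N i:ℝ) + cap i) * (L i / cap i) = N i * (L i / cap i) + L i := by
            field_simp
          linarith
        -- L i / cap i = 2^d * ((2⁻¹)^(i+1))^d
        have hiden : L i / (cap i : ℝ) = 2^d * ((2⁻¹:ℝ)^(i+1))^d := by
          obtain ⟨e, rfl⟩ : ∃ e, d = e + 1 := ⟨d - 1, by omega⟩
          have h2 : (2:ℝ) ≠ 0 := by norm_num
          have hcapval : ((cap i : ℕ) : ℝ) = 2^(i*e) := by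
            rw [hcap_def]
            simp only [Nat.add_sub_cancel]
            push_cast
            ring
          have hLi : L i = (2⁻¹:ℝ)^i := rfl
          rw [hcapval, hLi]
          simp only [inv_pow]
          rw [← pow_mul, div_eq_mul_inv,
            ← zpow_natCast (2:ℝ) i, ← zpow_natCast (2:ℝ) (i*e),
            ← zpow_natCast (2:ℝ) (e+1), ← zpow_natCast (2:ℝ) ((i+1)*(e+1)),
            ← zpow_neg, ← zpow_neg, ← zpow_neg, ← zpow_add₀ h2, ← zpow_add₀ h2]
          congr 1
          push_cast
          ring
        -- N i * ((2⁻¹)^(i+1))^d ≤ ∑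
        have hcount : (N i : ℝ) * ((2⁻¹:ℝ)^(i+1))^d ≤ ∑ n ∈ G i, c n ^ d := by
          have := Finset.card_nsmul_le_sum (G i) (fun n => c n ^ d) (((2⁻¹:ℝ)^(i+1))^d)
            (fun n hn => by
              have hscn : sc n = i := (hGmem i n).mp hn
              have h2 : (2⁻¹:ℝ)^(i+1) < c n := by
                have := Nat.find_spec (hex n)
                rwa [show Nat.find (hex n) = i from hscn] at this
              exact pow_le_pow_left₀ (by positivity) h2.le d)
          rw [nsmul_eq_mul] at this
          exact this
        calc (mj i:ℝ) * L i ≤ (N i : ℝ) * (L i / cap i) + L i := hstep1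
          _ = 2^d * ((N i : ℝ) * ((2⁻¹:ℝ)^(i+1))^d) + L i := by rw [hiden]; ring
          _ ≤ 2^d * (∑ n ∈ G i, c n ^ d) + L i := by
              have : (0:ℝ) < 2^d := by positivity
              nlinarith [hcount]
    have hsum1 : ∑ i ∈ Finset.range (j+1), (∑ n ∈ G i, c n ^ d) ≤ 1 := by
      have hdisj : ∀ i₁, i₁ ∈ Finset.range (j+1) → ∀ i₂, i₂ ∈ Finset.range (j+1) → i₁ ≠ i₂ →
          Disjoint (G i₁) (G i₂) := by
        intro i₁ _ i₂ _ hne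
        rw [Finset.disjoint_left]
        intro n h1 h2
        exact hne (((hGmem i₁ n).mp h1) ▸ ((hGmem i₂ n).mp h2) ▸ rfl)
      rw [← Finset.sum_biUnion hdisj]
      refine le_trans (Summable.sum_le_tsum _ (fun n _ => pow_nonneg (hc n).le d) hcsum) hctsum
    have hgeo : ∑ i ∈ Finset.range (j+1), L i ≤ 2 := by
      have := sum_geometric_two_le (j+1)
      rw [hL_def]
      simp only [one_div] at this ⊢
      exact this
    calc z (j+1) ≤ ∑ i ∈ Finset.range (j+1), (2^d * (∑ n ∈ G i, c n ^ d) + L i) :=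
          Finset.sum_le_sum fun i _ => hterm i
      _ = 2^d * (∑ i ∈ Finset.range (j+1), (∑ n ∈ G i, c n ^ d)) +
          ∑ i ∈ Finset.range (j+1), L i := by
          rw [Finset.sum_add_distrib, Finset.mul_sum]
      _ ≤ 2^d * 1 + 2 := by
          have h2d : (0:ℝ) ≤ 2^d := by positivity
          have := mul_le_mul_of_nonneg_left hsum1 h2d
          linarith [hgeo]
      _ = (2:ℝ)^d + 2 := by ring
  -- now define the embedding
  set B : ℝ := (2:ℝ)^d + 2 with hB_def
  have hB1 : (1:ℝ) ≤ B := by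
    rw [hB_def]
    have h : (0:ℝ) ≤ (2:ℝ)^d := by positivity
    linarith
  have hB0 : (0:ℝ) < B := lt_of_lt_of_le one_pos hB1
  set ε : ℝ := (4*(d:ℝ))⁻¹ with hε_def
  have hε0 : 0 < ε := by rw [hε_def]; positivity
  have hdne : (d:ℝ) ≠ 0 := ne_of_gt hd0
  have hεd : (d:ℝ) * ε = 4⁻¹ := by
    rw [hε_def]
    rw [mul_inv, ← mul_assoc, mul_comm ((d:ℝ)) (4⁻¹:ℝ), mul_assoc, mul_inv_cancel₀ hdne, mul_one]
  have hd1 : (1:ℝ) ≤ d := by exact_mod_cast hd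
  have hε14 : ε ≤ 4⁻¹ := by
    rw [hε_def]
    rw [inv_le_inv₀ (by positivity) (by norm_num)]
    linarith
  have hdpos : 0 < d := hd
  set v : ℕ → Fin d → ℝ := fun n i =>
    if (i:ℕ) = 0 then z (sc n) + lay n * L (sc n) else (dig n ((i:ℕ)-1)) * L (sc n) with hv_def
  set val : ℕ → (Fin d → ℝ) → Fin d → ℝ := fun n u i =>
    v n i + L (sc n)/4 + ε * c n * u i with hval_def
  have hεc : ∀ p (x : Fin d → ℝ), (∀ i, x i ∈ Set.Icc (0:ℝ) 1) → ∀ i,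
      0 ≤ ε * c p * x i ∧ ε * c p * x i ≤ ε * L (sc p) := by
    intro p x hx i
    have h1 := (hx i).1
    have h2 := (hx i).2
    have h3 := hc p
    have h4 := hsc2 p
    constructor
    · positivity
    · calc ε * c p * x i ≤ ε * c p * 1 := by
            nlinarith [mul_le_mul_of_nonneg_left h2 (by positivity : (0:ℝ) ≤ ε * c p)]
        _ ≤ ε * L (sc p) := by nlinarith [mul_le_mul_of_nonneg_left h4 hε0.le]
  -- the vertical estimate across different scales
  have hvert : ∀ p q (x y : Fin d → ℝ), (∀ i, x i ∈ Set.Icc (0:ℝ) 1) →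
      (∀ i, y i ∈ Set.Icc (0:ℝ) 1) → sc p < sc q →
      L (sc p) / 2 ≤ val q y ⟨0, hdpos⟩ - val p x ⟨0, hdpos⟩ := by
    intro p q x y hx hy hpq
    have hLp := hL0 (sc p)
    have hvp : val p x ⟨0, hdpos⟩ =
        z (sc p) + lay p * L (sc p) + L (sc p)/4 + ε * c p * x ⟨0, hdpos⟩ := by
      rw [hval_def, hv_def]
      simp
    have hvq : val q y ⟨0, hdpos⟩ =
        z (sc q) + lay q * L (sc q) + L (sc q)/4 + ε * c q * y ⟨0, hdpos⟩ := by
      rw [hval_def, hv_def]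
      simp
    have hup : val p x ⟨0, hdpos⟩ ≤ z (sc p + 1) - L (sc p)/2 := by
      rw [hvp, hzsucc]
      have hlayle : (lay p : ℝ) + 1 ≤ mj (sc p) := by exact_mod_cast hlay_lt p
      have hbd := (hεc p x hx ⟨0, hdpos⟩).2
      nlinarith [mul_le_mul_of_nonneg_right hlayle hLp.le, hbd,
        mul_le_mul_of_nonneg_right hε14 hLp.le]
    have hlow : z (sc q) ≤ val q y ⟨0, hdpos⟩ := by
      rw [hvq]
      have hbd := (hεc q y hy ⟨0, hdpos⟩).1
      have hLq := hL0 (sc q)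
      have hlay0 : (0:ℝ) ≤ (lay q : ℝ) := Nat.cast_nonneg _
      nlinarith
    have hmono : z (sc p + 1) ≤ z (sc q) := hzmono hpq
    rw [hvp, hvq]
    rw [hvp] at hup
    rw [hvq] at hlow
    linarith
  refine ⟨ε / B, by positivity, fun n u i => val n u i / B, ?_, ?_, ?_⟩
  · -- range in the unit cube
    intro n u hu i
    have hεcb := hεc n u hu i
    have hLn := hL0 (sc n)
    constructor
    · apply div_nonneg _ hB0.le
      rw [hval_def, hv_def]
      simp only []
      split
      · have h1 := hz0 (sc n)
        have h2 : (0:ℝ) ≤ (lay n : ℝ) := Nat.cast_nonneg _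
        nlinarith [hεcb.1]
      · have h2 : (0:ℝ) ≤ (dig n ((i:ℕ)-1) : ℝ) := Nat.cast_nonneg _
        nlinarith [hεcb.1]
    · rw [div_le_one hB0]
      rw [hval_def, hv_def]
      simp only []
      split
      · have hlayle : (lay n : ℝ) + 1 ≤ mj (sc n) := by exact_mod_cast hlay_lt n
        have hzb := hzB (sc n)
        have hzs := hzsucc (sc n)
        nlinarith [mul_le_mul_of_nonneg_right hlayle hLn.le, hεcb.2, hε14, hεcb.1]
      · have hdigle : (dig n ((i:ℕ)-1) : ℝ) + 1 ≤ (2:ℝ)^(sc n) := by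
          exact_mod_cast hdig_lt n ((i:ℕ)-1)
        have hpowL : (2:ℝ)^(sc n) * L (sc n) = 1 := by
          rw [hL_def]
          simp only [inv_pow]
          rw [mul_inv_cancel₀ (by positivity)]
        nlinarith [mul_le_mul_of_nonneg_right hdigle hLn.le, hεcb.2, hεcb.1, hε14, hB1]
  · -- homothety
    intro n u w i
    rw [hval_def]
    simp only []
    field_simp
    ring
  · -- separation
    intro n m u w hu hw hnm
    have hmaxc : max (c n) (c m) ≤ max (L (sc n)) (L (sc m)) :=
      max_le (le_trans (hsc2 n) (le_max_left _ _)) (le_trans (hsc2 m) (le_max_right _ _))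
    have hmaxL0 : 0 < max (L (sc n)) (L (sc m)) := lt_max_of_lt_left (hL0 _)
    have hmain : ∃ i : Fin d, max (L (sc n)) (L (sc m)) / 2 ≤ |val n u i - val m w i| := by
      rcases lt_trichotomy (sc n) (sc m) with hlt | heq | hgt
      · have hv1 := hvert n m u w hu hw hlt
        refine ⟨⟨0, hdpos⟩, ?_⟩
        have hmax : max (L (sc n)) (L (sc m)) = L (sc n) := max_eq_left (hLanti hlt.le)
        rw [hmax]
        calc L (sc n)/2 ≤ val m w ⟨0, hdpos⟩ - val n u ⟨0, hdpos⟩ := hv1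
          _ ≤ |val m w ⟨0, hdpos⟩ - val n u ⟨0, hdpos⟩| := le_abs_self _
          _ = |val n u ⟨0, hdpos⟩ - val m w ⟨0, hdpos⟩| := abs_sub_comm _ _
      · -- same scale
        have hLm : L (sc m) = L (sc n) := by rw [heq]
        have hmax : max (L (sc n)) (L (sc m)) = L (sc n) := by rw [hLm, max_self]
        have hLj := hL0 (sc n)
        rw [hmax]
        have hnoise : ∀ (i : Fin d),
            |ε * c n * u i - ε * c m * w i| ≤ ε * L (sc n) := by
          intro i
          have h1 := hεc n u hu i
          have h2 := hεc m w hw i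
          rw [← heq] at h2
          rw [abs_le]
          constructor
          · linarith [h1.1, h2.2]
          · linarith [h1.2, h2.1]
        have hone : ∀ a b : ℕ, a ≠ b → (1:ℝ) ≤ |(a:ℝ) - b| := by
          intro a b hab
          rcases Nat.lt_or_ge a b with h | h
          · have hcast : (a:ℝ) + 1 ≤ b := by exact_mod_cast h
            rw [abs_sub_comm, abs_of_nonneg (by linarith)]
            linarith
          · have hlt : b + 1 ≤ a := by omega
            have hcast : (b:ℝ) + 1 ≤ a := by exact_mod_cast hlt
            rw [abs_of_nonneg (by linarith)]
            linarith
        have habs : ∀ A Bb : ℝ, |A| - |Bb| ≤ |A + Bb| := by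
          intro A Bb
          have h := abs_add_le (A + Bb) (-Bb)
          simp only [add_neg_cancel_right, abs_neg] at h
          linarith
        have hεL : ε * L (sc n) ≤ L (sc n)/4 := by
          nlinarith [hε14, hLj]
        by_cases hlaycase : lay n = lay m
        · -- find a differing digit
          have hposne : pos n ≠ pos m := by
            intro hposeq
            apply hnm
            apply hidxinj n m heq
            rw [hidx_eq n, hidx_eq m, hlaycase, hposeq, heq]
          have hdigne : ∃ k, k < d - 1 ∧ dig n k ≠ dig m k := by
            by_contra hcon
            push_neg at hcon
            exact hposne (hpos_inj n m heq (fun k hk => hcon k hk))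
          obtain ⟨k, hk, hdk⟩ := hdigne
          have hik : k + 1 < d := by omega
          refine ⟨⟨k+1, hik⟩, ?_⟩
          have hvn : val n u ⟨k+1, hik⟩ = (dig n k : ℝ) * L (sc n) + L (sc n)/4 +
              ε * c n * u ⟨k+1, hik⟩ := by
            rw [hval_def, hv_def]
            simp
          have hvm : val m w ⟨k+1, hik⟩ = (dig m k : ℝ) * L (sc n) + L (sc n)/4 +
              ε * c m * w ⟨k+1, hik⟩ := by
            rw [hval_def, hv_def]
            simp [← heq]
          have hdiff : val n u ⟨k+1, hik⟩ - val m w ⟨k+1, hik⟩ =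
              ((dig n k : ℝ) - dig m k) * L (sc n) +
              (ε * c n * u ⟨k+1, hik⟩ - ε * c m * w ⟨k+1, hik⟩) := by
            rw [hvn, hvm]
            ring
          have h1 : (1:ℝ) ≤ |(dig n k : ℝ) - dig m k| := hone _ _ hdk
          have hAbs : L (sc n) ≤ |((dig n k:ℝ) - dig m k) * L (sc n)| := by
            rw [abs_mul, abs_of_pos hLj]
            nlinarith [h1, hLj]
          have hB2 := hnoise ⟨k+1, hik⟩
          have hA := habs (((dig n k:ℝ) - dig m k) * L (sc n))
            (ε * c n * u ⟨k+1, hik⟩ - ε * c m * w ⟨k+1, hik⟩)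
          rw [← hdiff] at hA
          linarith
        · -- layers differ
          refine ⟨⟨0, hdpos⟩, ?_⟩
          have hvn : val n u ⟨0, hdpos⟩ = z (sc n) + (lay n:ℝ) * L (sc n) + L (sc n)/4 +
              ε * c n * u ⟨0, hdpos⟩ := by
            rw [hval_def, hv_def]
            simp
          have hvm : val m w ⟨0, hdpos⟩ = z (sc n) + (lay m:ℝ) * L (sc n) + L (sc n)/4 +
              ε * c m * w ⟨0, hdpos⟩ := by
            rw [hval_def, hv_def]
            simp [← heq]
          have hdiff : val n u ⟨0, hdpos⟩ - val m w ⟨0, hdpos⟩ =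
              ((lay n:ℝ) - lay m) * L (sc n) +
              (ε * c n * u ⟨0, hdpos⟩ - ε * c m * w ⟨0, hdpos⟩) := by
            rw [hvn, hvm]
            ring
          have h1 : (1:ℝ) ≤ |(lay n:ℝ) - lay m| := hone _ _ hlaycase
          have hAbs : L (sc n) ≤ |((lay n:ℝ) - lay m) * L (sc n)| := by
            rw [abs_mul, abs_of_pos hLj]
            nlinarith [h1, hLj]
          have hB2 := hnoise ⟨0, hdpos⟩
          have hA := habs (((lay n:ℝ) - lay m) * L (sc n))
            (ε * c n * u ⟨0, hdpos⟩ - ε * c m * w ⟨0, hdpos⟩)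
          rw [← hdiff] at hA
          linarith
      · have hv1 := hvert m n w u hw hu hgt
        refine ⟨⟨0, hdpos⟩, ?_⟩
        have hmax : max (L (sc n)) (L (sc m)) = L (sc m) := max_eq_right (hLanti hgt.le)
        rw [hmax]
        exact le_trans hv1 (le_abs_self _)
    obtain ⟨i, hi⟩ := hmain
    refine ⟨i, ?_⟩
    have hsplit : val n u i / B - val m w i / B = (val n u i - val m w i)/B := by ring
    rw [hsplit, abs_div, abs_of_pos hB0, le_div_iff₀ hB0]
    have hexp : (d:ℝ) * (ε/B * max (c n) (c m)) * B = (d * ε) * max (c n) (c m) := by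
      field_simp
    rw [hexp, hεd]
    nlinarith [hmaxc, hi, hmaxL0]

section Atomic

set_option linter.unusedSectionVars false

variable {X : Type*} [MeasurableSpace X] [MeasurableSingletonClass X]

noncomputable def atomicM (b : ℕ → ℝ≥0∞) (p : ℕ → X) : Measure X :=
  Measure.sum (fun n => b n • Measure.dirac (p n))

lemma atomicM_apply (b : ℕ → ℝ≥0∞) (p : ℕ → X) {s : Set X} (hs : MeasurableSet s) :
    atomicM b p s = ∑' n, b n * s.indicator 1 (p n) := by
  rw [atomicM, Measure.sum_apply _ hs]
  simp [Measure.dirac_apply' _ hs]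

lemma atomicM_univ (b : ℕ → ℝ≥0∞) (p : ℕ → X) :
    atomicM b p Set.univ = ∑' n, b n := by
  rw [atomicM_apply b p MeasurableSet.univ]; simp

lemma atomicM_singleton (b : ℕ → ℝ≥0∞) {p : ℕ → X} (hp : Function.Injective p) (n : ℕ) :
    atomicM b p {p n} = b n := by
  rw [atomicM_apply b p (measurableSet_singleton _)]
  rw [tsum_eq_single n]
  · simp
  · intro m hm
    have : p m ∉ ({p n} : Set X) := by
      simp only [Set.mem_singleton_iff]; exact fun h => hm (hp h)
    simp [Set.indicator_of_notMem this]

lemma atomicM_compl_range (b : ℕ → ℝ≥0∞) (p : ℕ → X) :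
    atomicM b p (Set.range p)ᶜ = 0 := by
  rw [atomicM_apply b p (Set.countable_range p).measurableSet.compl]
  simp

lemma lintegral_atomicM (b : ℕ → ℝ≥0∞) (p : ℕ → X) (f : X → ℝ≥0∞) :
    ∫⁻ x, f x ∂(atomicM b p) = ∑' n, b n * f (p n) := by
  rw [atomicM, lintegral_sum_measure]
  congr 1; ext n
  rw [lintegral_smul_measure, lintegral_dirac, smul_eq_mul]

/-- The diagonal coupling of two atomic measures. -/
lemma isCoupling_atomic (b : ℕ → ℝ≥0∞) (p q : ℕ → X) :
    IsCoupling (atomicM b p) (atomicM b q)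
      (atomicM b (fun n => ((p n, q n) : X × X))) := by
  constructor
  · rw [atomicM, Measure.map_sum measurable_fst.aemeasurable]
    apply Measure.sum_congr
    intro n
    rw [Measure.map_smul, Measure.map_dirac' measurable_fst]
  · rw [atomicM, Measure.map_sum measurable_snd.aemeasurable]
    apply Measure.sum_congr
    intro n
    rw [Measure.map_smul, Measure.map_dirac' measurable_snd]

/-- Lower bound for the cost of any coupling of two atomic measures, under a
separation hypothesis. -/
lemma coupling_cost_lower [MetricSpace X]
    (b : ℕ → ℝ≥0∞) (p q : ℕ → X) (hp : Function.Injective p) (hq : Function.Injective q)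
    (hsep : ∀ n m, dist (p n) (q n) ≤ dist (p n) (q m))
    (π : Measure (X × X)) (hπ : IsCoupling (atomicM b p) (atomicM b q) π) :
    ∑' n, b n * ENNReal.ofReal (dist (p n) (q n) ^ (2:ℝ)) ≤
      ∫⁻ z, ENNReal.ofReal (dist z.1 z.2 ^ (2:ℝ)) ∂π := by
  obtain ⟨hfst, hsnd⟩ := hπ
  set f : X × X → ℝ≥0∞ := fun z => ENNReal.ofReal (dist z.1 z.2 ^ (2:ℝ)) with hf
  set P : Set X := Set.range p with hP
  set Q : Set X := Set.range q with hQ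
  have hPm : MeasurableSet P := (Set.countable_range p).measurableSet
  have hQm : MeasurableSet Q := (Set.countable_range q).measurableSet
  -- the measure of vertical/horizontal complements vanish
  have hPc : π (Pᶜ ×ˢ (Set.univ : Set X)) = 0 := by
    have : (Pᶜ ×ˢ (Set.univ : Set X)) = Prod.fst ⁻¹' Pᶜ := by
      ext z; simp
    rw [this, ← Measure.map_apply measurable_fst hPm.compl, hfst]
    exact atomicM_compl_range b p
  have hQc : π ((Set.univ : Set X) ×ˢ Qᶜ) = 0 := by
    have : ((Set.univ : Set X) ×ˢ Qᶜ) = Prod.snd ⁻¹' Qᶜ := by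
      ext z; simp
    rw [this, ← Measure.map_apply measurable_snd hQm.compl, hsnd]
    exact atomicM_compl_range b q
  -- reduce to the countable set P ×ˢ Q
  have hcount : (P ×ˢ Q).Countable := (Set.countable_range p).prod (Set.countable_range q)
  have step1 : ∫⁻ z in P ×ˢ Q, f z ∂π ≤ ∫⁻ z, f z ∂π := setLIntegral_le_lintegral _ _
  rw [lintegral_countable f hcount] at step1
  refine le_trans ?_ step1
  -- reindex the sum over P ×ˢ Q by ℕ × ℕ
  have hinj : Function.Injective (fun nm : ℕ × ℕ => ((p nm.1, q nm.2) : X × X)) := by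
    intro ⟨n, m⟩ ⟨n', m'⟩ h
    simp only [Prod.mk.injEq] at h
    exact Prod.ext (hp h.1) (hq h.2)
  let e : ℕ × ℕ ≃ ↥(P ×ˢ Q) :=
    Equiv.ofBijective (fun nm => ⟨(p nm.1, q nm.2), by
      exact ⟨Set.mem_range_self _, Set.mem_range_self _⟩⟩)
      ⟨fun nm nm' h => hinj (congrArg Subtype.val h), by
        rintro ⟨⟨u, v⟩, hu, hv⟩
        obtain ⟨n, hn⟩ := hu
        obtain ⟨m, hm⟩ := hv
        exact ⟨(n, m), Subtype.ext (by simp [hn, hm])⟩⟩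
  rw [← Equiv.tsum_eq e (fun a => f a * π {(a : X × X)})]
  -- now a sum over ℕ × ℕ
  have key : ∀ n : ℕ, ∑' m : ℕ, π {(p n, q m)} = b n := by
    intro n
    have hU : ({p n} ×ˢ Q : Set (X × X)) = ⋃ m, {(p n, q m)} := by
      ext ⟨u, v⟩
      simp only [Set.mem_prod, Set.mem_singleton_iff, Set.mem_iUnion, hQ, Set.mem_range]
      constructor
      · rintro ⟨rfl, m, rfl⟩; exact ⟨m, rfl⟩
      · rintro ⟨m, h⟩
        rw [Prod.ext_iff] at h
        exact ⟨h.1, m, h.2.symm⟩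
    have hdisj : Pairwise (Function.onFun Disjoint fun m => ({(p n, q m)} : Set (X × X))) := by
      intro m m' hmm'
      simp only [Function.onFun, Set.disjoint_singleton]
      intro h
      rw [Prod.ext_iff] at h
      exact hmm' (hq h.2)
    have hsum : π ({p n} ×ˢ Q) = ∑' m, π {(p n, q m)} := by
      rw [hU, measure_iUnion hdisj (fun m => measurableSet_singleton _)]
    have h1 : π ({p n} ×ˢ Q) ≤ b n := by
      have hsub : ({p n} ×ˢ Q : Set (X × X)) ⊆ Prod.fst ⁻¹' {p n} := by
        rintro ⟨u, v⟩ ⟨hu, _⟩; exact hu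
      calc π ({p n} ×ˢ Q) ≤ π (Prod.fst ⁻¹' {p n}) := measure_mono hsub
        _ = b n := by
          rw [← Measure.map_apply measurable_fst (measurableSet_singleton _), hfst]
          exact atomicM_singleton b hp n
    have h2 : b n ≤ π ({p n} ×ˢ Q) := by
      have hsub : (Prod.fst ⁻¹' {p n} : Set (X × X)) ⊆ ({p n} ×ˢ Q) ∪ (Set.univ ×ˢ Qᶜ) := by
        rintro ⟨u, v⟩ hu
        by_cases hv : v ∈ Q
        · exact Or.inl ⟨hu, hv⟩
        · exact Or.inr ⟨trivial, hv⟩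
      calc b n = π (Prod.fst ⁻¹' {p n}) := by
            rw [← Measure.map_apply measurable_fst (measurableSet_singleton _), hfst]
            exact (atomicM_singleton b hp n).symm
        _ ≤ π (({p n} ×ˢ Q) ∪ (Set.univ ×ˢ Qᶜ)) := measure_mono hsub
        _ ≤ π ({p n} ×ˢ Q) + π (Set.univ ×ˢ Qᶜ) := measure_union_le _ _
        _ = π ({p n} ×ˢ Q) := by rw [hQc, add_zero]
    rw [← hsum]
    exact le_antisymm h1 h2
  calc ∑' n, b n * ENNReal.ofReal (dist (p n) (q n) ^ (2:ℝ))
      = ∑' n, ENNReal.ofReal (dist (p n) (q n) ^ (2:ℝ)) * ∑' m, π {(p n, q m)} := by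
        congr 1; ext n; rw [key n, mul_comm]
    _ = ∑' n, ∑' m, ENNReal.ofReal (dist (p n) (q n) ^ (2:ℝ)) * π {(p n, q m)} := by
        congr 1; ext n; rw [ENNReal.tsum_mul_left]
    _ ≤ ∑' n, ∑' m, ENNReal.ofReal (dist (p n) (q m) ^ (2:ℝ)) * π {(p n, q m)} := by
        refine ENNReal.tsum_le_tsum fun n => ENNReal.tsum_le_tsum fun m => ?_
        refine mul_le_mul_left (ENNReal.ofReal_le_ofReal ?_) _
        exact Real.rpow_le_rpow dist_nonneg (hsep n m) (by norm_num)
    _ = ∑' nm : ℕ × ℕ, ENNReal.ofReal (dist (p nm.1) (q nm.2) ^ (2:ℝ)) * π {(p nm.1, q nm.2)} :=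
        (ENNReal.tsum_prod
          (f := fun n m => ENNReal.ofReal (dist (p n) (q m) ^ (2:ℝ)) * π {(p n, q m)})).symm
    _ = ∑' nm : ℕ × ℕ, f (e nm) * π {((e nm : ↥(P ×ˢ Q)) : X × X)} := rfl

lemma atomic_W2cost [MetricSpace X]
    (b : ℕ → ℝ≥0∞) (p q : ℕ → X) (hp : Function.Injective p) (hq : Function.Injective q)
    (hsep : ∀ n m, dist (p n) (q n) ≤ dist (p n) (q m)) :
    (⨅ (π : Measure (X × X)) (_ : IsCoupling (atomicM b p) (atomicM b q) π),
      ∫⁻ z, ENNReal.ofReal (dist z.1 z.2 ^ (2:ℝ)) ∂π) =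
      ∑' n, b n * ENNReal.ofReal (dist (p n) (q n) ^ (2:ℝ)) := by
  apply le_antisymm
  · refine le_trans (iInf₂_le _ (isCoupling_atomic b p q)) ?_
    rw [lintegral_atomicM]
  · exact le_iInf₂ fun π hπ => coupling_cost_lower b p q hp hq hsep π hπ

end Atomic
set_option maxHeartbeats 2000000 in
/-- if `(a_n)` is a positive `ℓ^{2d/(d+2)}` sequence, then the
generalized Hilbert cube `HC(I^d; ā)` embeds homothetically into `W₂(I^d)`:
there are `K > 0` and `h` with `W₂(h x̄, h ȳ) = K · d_ā(x̄, ȳ)`. -/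
theorem stmt13 (d : ℕ) (hd : 1 ≤ d) (a : ℕ → ℝ) (ha : ∀ n, 0 < a n)
    (hsum : Summable (fun n => a n ^ ((2 * d : ℝ) / (d + 2)))) :
    ∃ K : ℝ, 0 < K ∧
      ∃ h : (ℕ → UnitCube d) → Measure (UnitCube d),
        (∀ x, IsProbabilityMeasure (h x)) ∧
        ∀ x y : ℕ → UnitCube d,
          Wp 2 (h x) (h y) =
            ENNReal.ofReal
              (K * Real.sqrt (∑' n, a n ^ 2 * dist (x n) (y n) ^ 2)) := by
  classical
  have hd0 : (0:ℝ) < d := by exact_mod_cast hd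
  have hd2 : (0:ℝ) < (d:ℝ) + 2 := by linarith
  have hd1 : (1:ℝ) ≤ d := by exact_mod_cast hd
  set pe : ℝ := (2 * d : ℝ) / (d + 2) with hpe_def
  set S : ℝ := ∑' n, a n ^ pe with hS_def
  have hterm_pos : ∀ n, 0 < a n ^ pe := fun n => Real.rpow_pos_of_pos (ha n) _
  have hS0 : 0 < S := by
    rw [hS_def]
    exact Summable.tsum_pos hsum (fun n => (hterm_pos n).le) 0 (hterm_pos 0)
  set T : ℝ := S ^ ((d:ℝ)⁻¹) with hT_def
  have hT0 : 0 < T := Real.rpow_pos_of_pos hS0 _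
  have hTd : T ^ d = S := by
    rw [hT_def, ← Real.rpow_natCast (S ^ ((d:ℝ)⁻¹)) d, ← Real.rpow_mul hS0.le,
      inv_mul_cancel₀ (ne_of_gt hd0), Real.rpow_one]
  set c : ℕ → ℝ := fun n => a n ^ ((2:ℝ)/(d+2)) / T with hc_def
  have hc0 : ∀ n, 0 < c n := fun n => div_pos (Real.rpow_pos_of_pos (ha n) _) hT0
  have hcd : ∀ n, c n ^ d = a n ^ pe / S := by
    intro n
    rw [hc_def]
    simp only []
    rw [div_pow, hTd]
    congr 1
    rw [← Real.rpow_natCast (a n ^ ((2:ℝ)/(d+2))) d, ← Real.rpow_mul (ha n).le]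
    congr 1
    rw [hpe_def]
    field_simp
  have hcsum : Summable (fun n => c n ^ d) := by
    refine Summable.congr (hsum.div_const S) fun n => (hcd n).symm
  have hctsum : ∑' n, c n ^ d ≤ 1 := by
    rw [tsum_congr hcd, tsum_div_const, hS_def, div_self (ne_of_gt hS0)]
  obtain ⟨K₀, hK₀, F, hFrange, hFhom, hFsep⟩ := packing d hd c hc0 hcsum hctsum
  -- lift `F` to maps of the unit cube
  set P : ℕ → UnitCube d → UnitCube d := fun n x =>
    ⟨(WithLp.equiv 2 (Fin d → ℝ)).symm (F n (fun j => x.1 j)),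
      hFrange n _ (fun i => x.2 i)⟩ with hP_def
  have hPcoord : ∀ n (x : UnitCube d) (i : Fin d), (P n x).1 i = F n (fun j => x.1 j) i :=
    fun n x i => rfl
  have hPdist : ∀ n (x y : UnitCube d), dist (P n x) (P n y) = (K₀ * c n) * dist x y := by
    intro n x y
    rw [UnitCube.dist_eq', UnitCube.dist_eq']
    have hco : ∀ i : Fin d, (P n x).1 i - (P n y).1 i = K₀ * c n * (x.1 i - y.1 i) :=
      fun i => hFhom n _ _ i
    have hnn : (0:ℝ) ≤ K₀ * c n := (mul_pos hK₀ (hc0 n)).le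
    calc Real.sqrt (∑ i, ((P n x).1 i - (P n y).1 i)^2)
        = Real.sqrt (∑ i, (K₀ * c n)^2 * (x.1 i - y.1 i)^2) := by
          congr 1
          refine Finset.sum_congr rfl fun i _ => ?_
          rw [hco i, mul_pow]
      _ = (K₀ * c n) * Real.sqrt (∑ i, (x.1 i - y.1 i)^2) := by
          rw [← Finset.mul_sum, Real.sqrt_mul (by positivity),
            Real.sqrt_sq hnn]
  have hdiam : ∀ (x y : UnitCube d), dist x y ≤ Real.sqrt d := by
    intro x y
    rw [UnitCube.dist_eq']
    apply Real.sqrt_le_sqrt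
    calc ∑ i, (x.1 i - y.1 i)^2 ≤ ∑ _i : Fin d, (1:ℝ) := by
          refine Finset.sum_le_sum fun i _ => ?_
          have h1 := x.2 i
          have h2 := y.2 i
          simp only [Set.mem_Icc] at h1 h2
          nlinarith [h1.1, h1.2, h2.1, h2.2]
      _ = d := by simp
  have hsqd : Real.sqrt d ≤ d := by
    have h := Real.sqrt_le_sqrt (show (d:ℝ) ≤ (d:ℝ)^2 by nlinarith [hd1])
    rwa [Real.sqrt_sq hd0.le] at h
  have hsepd : ∀ n m (x y : UnitCube d), n ≠ m →
      Real.sqrt d * (K₀ * max (c n) (c m)) ≤ dist (P n x) (P m y) := by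
    intro n m x y hnm
    obtain ⟨i, hi⟩ := hFsep n m _ _ (fun i => x.2 i) (fun i => y.2 i) hnm
    have hmax0 : (0:ℝ) ≤ K₀ * max (c n) (c m) :=
      (mul_pos hK₀ (lt_max_of_lt_left (hc0 n))).le
    have h1 : |(P n x).1 i - (P m y).1 i| ≤
        Real.sqrt (∑ i, ((P n x).1 i - (P m y).1 i)^2) := by
      rw [← Real.sqrt_sq_eq_abs]
      exact Real.sqrt_le_sqrt
        (Finset.single_le_sum (f := fun j : Fin d => ((P n x).1 j - (P m y).1 j)^2)
          (fun j _ => sq_nonneg _) (Finset.mem_univ i))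
    calc Real.sqrt d * (K₀ * max (c n) (c m)) ≤ (d:ℝ) * (K₀ * max (c n) (c m)) :=
          mul_le_mul_of_nonneg_right hsqd hmax0
      _ ≤ |F n (fun j => x.1 j) i - F m (fun j => y.1 j) i| := hi
      _ = |(P n x).1 i - (P m y).1 i| := rfl
      _ ≤ Real.sqrt (∑ i, ((P n x).1 i - (P m y).1 i)^2) := h1
      _ = dist (P n x) (P m y) := (UnitCube.dist_eq' _ _).symm
  have hPinj : ∀ (xs : ℕ → UnitCube d), Function.Injective (fun n => P n (xs n)) := by
    intro xs n m hnm
    by_contra hne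
    have h1 := hsepd n m (xs n) (xs m) hne
    simp only [] at hnm
    rw [hnm, dist_self] at h1
    have h2 : 0 < Real.sqrt d * (K₀ * max (c n) (c m)) := by
      apply mul_pos (Real.sqrt_pos.mpr hd0)
      exact mul_pos hK₀ (lt_max_of_lt_left (hc0 n))
    linarith
  have hsep' : ∀ (xs ys : ℕ → UnitCube d) n m,
      dist (P n (xs n)) (P n (ys n)) ≤ dist (P n (xs n)) (P m (ys m)) := by
    intro xs ys n m
    rcases eq_or_ne n m with rfl | hne
    · exact le_refl _
    · calc dist (P n (xs n)) (P n (ys n)) = (K₀ * c n) * dist (xs n) (ys n) := hPdist _ _ _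
        _ ≤ (K₀ * c n) * Real.sqrt d := by
            refine mul_le_mul_of_nonneg_left (hdiam _ _) (mul_pos hK₀ (hc0 n)).le
        _ = Real.sqrt d * (K₀ * c n) := mul_comm _ _
        _ ≤ Real.sqrt d * (K₀ * max (c n) (c m)) := by
            have h1 : c n ≤ max (c n) (c m) := le_max_left _ _
            exact mul_le_mul_of_nonneg_left
              (mul_le_mul_of_nonneg_left h1 hK₀.le) (Real.sqrt_nonneg _)
        _ ≤ dist (P n (xs n)) (P m (ys m)) := hsepd n m _ _ hne
  -- the weights
  set b : ℕ → ℝ≥0∞ := fun n => ENNReal.ofReal (a n ^ pe / S) with hb_def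
  have hbsum : ∑' n, b n = 1 := by
    rw [hb_def]
    rw [← ENNReal.ofReal_tsum_of_nonneg (fun n => div_nonneg (hterm_pos n).le hS0.le)
      (hsum.div_const S)]
    rw [tsum_div_const, ← hS_def, div_self (ne_of_gt hS0), ENNReal.ofReal_one]
  -- summability of a²
  have ha2sum : Summable (fun n => a n ^ 2) := by
    have h0 : Filter.Tendsto (fun n => a n ^ pe) Filter.atTop (nhds 0) :=
      hsum.tendsto_atTop_zero
    have hpe0 : 0 < pe := by rw [hpe_def]; positivity
    have hpe2 : pe ≤ 2 := by
      rw [hpe_def, div_le_iff₀ hd2]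
      nlinarith
    have hev : ∀ᶠ n in Filter.atTop, a n ^ pe < 1 := h0.eventually (gt_mem_nhds one_pos)
    have hev2 : ∀ᶠ n in Filter.atTop, a n ^ 2 ≤ a n ^ pe := by
      filter_upwards [hev] with n hn
      have ha1 : a n ≤ 1 := by
        by_contra hgt
        push_neg at hgt
        have h2 := (Real.one_lt_rpow_iff_of_pos (ha n)).mpr (Or.inl ⟨hgt, hpe0⟩)
        linarith
      have heq2 : a n ^ (2:ℝ) = a n ^ (2:ℕ) := by
        rw [show (2:ℝ) = ((2:ℕ):ℝ) by norm_num, Real.rpow_natCast]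
      calc a n ^ 2 = a n ^ (2:ℝ) := heq2.symm
        _ ≤ a n ^ pe := Real.rpow_le_rpow_of_exponent_ge (ha n) ha1 hpe2
    obtain ⟨M, hM⟩ := Filter.eventually_atTop.mp hev2
    rw [← summable_nat_add_iff M]
    exact Summable.of_nonneg_of_le (fun n => sq_nonneg _) (fun n => hM (n+M) (by omega))
      ((summable_nat_add_iff M).mpr hsum)
  set C₂ : ℝ := K₀^2/(S*T^2) with hC₂_def
  have hC₂0 : 0 < C₂ := by rw [hC₂_def]; positivity
  refine ⟨Real.sqrt C₂, Real.sqrt_pos.mpr hC₂0,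
    fun xs => atomicM b (fun n => P n (xs n)), fun xs => ?_, ?_⟩
  · exact ⟨by rw [atomicM_univ, hbsum]⟩
  intro x y
  have hrpow2 : ∀ t : ℝ, t ^ (2:ℝ) = t ^ (2:ℕ) := by
    intro t
    rw [show (2:ℝ) = ((2:ℕ):ℝ) by norm_num, Real.rpow_natCast]
  have hterm : ∀ n, b n * ENNReal.ofReal (dist (P n (x n)) (P n (y n)) ^ (2:ℝ)) =
      ENNReal.ofReal (C₂ * (a n ^ 2 * dist (x n) (y n) ^ 2)) := by
    intro n
    rw [hPdist, hb_def]
    rw [← ENNReal.ofReal_mul (div_nonneg (hterm_pos n).le hS0.le)]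
    congr 1
    rw [hrpow2]
    have ha2 : a n ^ pe * (a n ^ ((2:ℝ)/(d+2)))^(2:ℕ) = a n ^ (2:ℕ) := by
      rw [← hrpow2 _, ← Real.rpow_natCast (a n) 2,
        ← Real.rpow_mul (ha n).le, ← Real.rpow_add (ha n)]
      congr 1
      rw [hpe_def]
      field_simp
      ring
    calc a n ^ pe / S * ((K₀ * c n) * dist (x n) (y n)) ^ (2:ℕ)
        = (K₀^2/(S*T^2)) * ((a n ^ pe * (a n ^ ((2:ℝ)/(d+2)))^(2:ℕ)) *
            dist (x n) (y n)^2) := by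
          rw [hc_def]
          field_simp
      _ = C₂ * (a n ^ 2 * dist (x n) (y n) ^ 2) := by rw [ha2, hC₂_def]
  have hsummable : Summable (fun n => C₂ * (a n ^ 2 * dist (x n) (y n) ^ 2)) := by
    apply Summable.mul_left
    refine Summable.of_nonneg_of_le (fun n => by positivity) (fun n => ?_)
      (ha2sum.mul_right (d:ℝ))
    have h1 : dist (x n) (y n) ^ 2 ≤ d := by
      have h := hdiam (x n) (y n)
      nlinarith [dist_nonneg (x := x n) (y := y n), Real.sq_sqrt hd0.le,
        Real.sqrt_nonneg (d:ℝ)]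
    nlinarith [sq_nonneg (a n), dist_nonneg (x := x n) (y := y n), sq_nonneg (dist (x n) (y n))]
  simp only [Wp]
  rw [atomic_W2cost b _ _ (hPinj x) (hPinj y) (hsep' x y)]
  rw [tsum_congr hterm]
  rw [← ENNReal.ofReal_tsum_of_nonneg (fun n => by positivity) hsummable]
  rw [tsum_mul_left]
  rw [ENNReal.ofReal_rpow_of_nonneg
    (mul_nonneg hC₂0.le (tsum_nonneg (fun n => by positivity)))
    (by norm_num : (0:ℝ) ≤ 1/2)]
  congr 1
  rw [← Real.sqrt_eq_rpow]
  rw [Real.sqrt_mul hC₂0.le]
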